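/- For real parameters 0 < α < β, the integral ∫_{-α}^{β} (2ζ + α - β) / sqrt((ζ²+4)(α+ζ)(β-ζ)) dζ is strictly negative. -/

import Mathlib

open Real MeasureTheory

/-- The integrand. -/
noncomputable def Fint (α β : ℝ) (ζ : ℝ) : ℝ :=
  (2*ζ + α - β) / Real.sqrt ((ζ^2 + 4) * (α + ζ) * (β - ζ))

lemma Fint_meas (α β : ℝ) : Measurable (Fint α β) := by
  unfold Fint
  fun_prop

/-- Integrability on the left half `[-α, (β-α)/2]`. -/
lemma Fint_int_left (α β : ℝ) (hα : 0 < α) (hαβ : α < β) :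
    IntervalIntegrable (Fint α β) volume (-α) ((β-α)/2) := by
  have hL : 0 < (α+β)/2 := by linarith
  have h1 : IntervalIntegrable (fun x : ℝ => x ^ (-(1/2) : ℝ)) volume 0 ((β-α)/2 + α) :=
    intervalIntegral.intervalIntegrable_rpow' (by norm_num)
  have h2 := (h1.comp_add_right α).const_mul ((3*β) / (2*Real.sqrt ((α+β)/2)))
  rw [zero_sub, add_sub_cancel_right] at h2
  refine h2.mono_fun' ((Fint_meas α β).aestronglyMeasurable) ?_
  rw [Filter.EventuallyLE, Set.uIoc_of_le (by linarith : -α ≤ (β-α)/2)]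
  filter_upwards [MeasureTheory.ae_restrict_mem measurableSet_Ioc] with ζ hζ
  obtain ⟨hζ1, hζ2⟩ := hζ
  have haz : 0 < α + ζ := by linarith
  have hbz : (α+β)/2 ≤ β - ζ := by linarith
  have hbz0 : 0 ≤ β - ζ := le_trans hL.le hbz
  have hnum : |2*ζ + α - β| ≤ 3*β := by
    rw [abs_le]; constructor <;> linarith
  have hD : 4 * ((α+β)/2) * (α+ζ) ≤ (ζ^2+4) * (α+ζ) * (β-ζ) := by
    nlinarith [mul_nonneg (mul_nonneg (sq_nonneg ζ) haz.le) hbz0,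
      mul_nonneg (sub_nonneg.2 hbz) haz.le]
  have hsq : 2 * Real.sqrt ((α+β)/2) * Real.sqrt (α+ζ)
      ≤ Real.sqrt ((ζ^2+4) * (α+ζ) * (β-ζ)) := by
    have e : (4:ℝ) * ((α+β)/2) * (α+ζ) = (2 * Real.sqrt ((α+β)/2) * Real.sqrt (α+ζ))^2 := by
      rw [mul_pow, mul_pow, Real.sq_sqrt hL.le, Real.sq_sqrt haz.le]; ring
    calc 2 * Real.sqrt ((α+β)/2) * Real.sqrt (α+ζ)
        = Real.sqrt (4 * ((α+β)/2) * (α+ζ)) := by rw [e, Real.sqrt_sq (by positivity)]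
      _ ≤ _ := Real.sqrt_le_sqrt hD
  have hpos : 0 < 2 * Real.sqrt ((α+β)/2) * Real.sqrt (α+ζ) := by positivity
  have hFnorm : ‖Fint α β ζ‖ = |2*ζ + α - β| / Real.sqrt ((ζ^2+4)*(α+ζ)*(β-ζ)) := by
    unfold Fint; rw [Real.norm_eq_abs, abs_div, abs_of_nonneg (Real.sqrt_nonneg _)]
  have hrpow : (ζ + α) ^ (-(1/2):ℝ) = (Real.sqrt (α+ζ))⁻¹ := by
    rw [add_comm ζ α, Real.rpow_neg haz.le, ← Real.sqrt_eq_rpow]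
  calc ‖Fint α β ζ‖ = |2*ζ+α-β| / Real.sqrt ((ζ^2+4)*(α+ζ)*(β-ζ)) := hFnorm
    _ ≤ (3*β) / (2*Real.sqrt ((α+β)/2) * Real.sqrt (α+ζ)) :=
        div_le_div₀ (by linarith) hnum hpos hsq
    _ = (3*β)/(2*Real.sqrt ((α+β)/2)) * (ζ+α)^(-(1/2):ℝ) := by
        rw [hrpow, div_mul_eq_div_div, div_eq_mul_inv]

/-- Integrability on the right half `[(β-α)/2, β]`. -/
lemma Fint_int_right (α β : ℝ) (hα : 0 < α) (hαβ : α < β) :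
    IntervalIntegrable (Fint α β) volume ((β-α)/2) β := by
  have hL : 0 < (α+β)/2 := by linarith
  have h1 : IntervalIntegrable (fun x : ℝ => x ^ (-(1/2) : ℝ)) volume 0 (β - (β-α)/2) :=
    intervalIntegral.intervalIntegrable_rpow' (by norm_num)
  have h2 := ((h1.comp_sub_left β).symm).const_mul ((3*β) / (2*Real.sqrt ((α+β)/2)))
  rw [sub_zero, sub_sub_cancel] at h2
  refine h2.mono_fun' ((Fint_meas α β).aestronglyMeasurable) ?_
  rw [Filter.EventuallyLE, Set.uIoc_of_le (by linarith : (β-α)/2 ≤ β)]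
  filter_upwards [MeasureTheory.ae_restrict_mem measurableSet_Ioc] with ζ hζ
  obtain ⟨hζ1, hζ2⟩ := hζ
  rcases eq_or_lt_of_le hζ2 with heq | hlt
  · subst heq
    simp [Fint, sub_self, Real.zero_rpow (show (-(1/2):ℝ) ≠ 0 by norm_num)]
  have hbz : 0 < β - ζ := by linarith
  have haz : (α+β)/2 ≤ α + ζ := by linarith
  have haz0 : 0 < α + ζ := lt_of_lt_of_le hL haz
  have hnum : |2*ζ + α - β| ≤ 3*β := by
    rw [abs_le]; constructor <;> linarith
  have hD : 4 * ((α+β)/2) * (β-ζ) ≤ (ζ^2+4) * (α+ζ) * (β-ζ) := by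
    nlinarith [mul_nonneg (mul_nonneg (sq_nonneg ζ) haz0.le) hbz.le,
      mul_nonneg (sub_nonneg.2 haz) hbz.le]
  have hsq : 2 * Real.sqrt ((α+β)/2) * Real.sqrt (β-ζ)
      ≤ Real.sqrt ((ζ^2+4) * (α+ζ) * (β-ζ)) := by
    have e : (4:ℝ) * ((α+β)/2) * (β-ζ) = (2 * Real.sqrt ((α+β)/2) * Real.sqrt (β-ζ))^2 := by
      rw [mul_pow, mul_pow, Real.sq_sqrt hL.le, Real.sq_sqrt hbz.le]; ring
    calc 2 * Real.sqrt ((α+β)/2) * Real.sqrt (β-ζ)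
        = Real.sqrt (4 * ((α+β)/2) * (β-ζ)) := by rw [e, Real.sqrt_sq (by positivity)]
      _ ≤ _ := Real.sqrt_le_sqrt hD
  have hpos : 0 < 2 * Real.sqrt ((α+β)/2) * Real.sqrt (β-ζ) := by positivity
  have hFnorm : ‖Fint α β ζ‖ = |2*ζ + α - β| / Real.sqrt ((ζ^2+4)*(α+ζ)*(β-ζ)) := by
    unfold Fint; rw [Real.norm_eq_abs, abs_div, abs_of_nonneg (Real.sqrt_nonneg _)]
  have hrpow : (β - ζ) ^ (-(1/2):ℝ) = (Real.sqrt (β-ζ))⁻¹ := by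
    rw [Real.rpow_neg hbz.le, ← Real.sqrt_eq_rpow]
  calc ‖Fint α β ζ‖ = |2*ζ+α-β| / Real.sqrt ((ζ^2+4)*(α+ζ)*(β-ζ)) := hFnorm
    _ ≤ (3*β) / (2*Real.sqrt ((α+β)/2) * Real.sqrt (β-ζ)) :=
        div_le_div₀ (by linarith) hnum hpos hsq
    _ = (3*β)/(2*Real.sqrt ((α+β)/2)) * (β-ζ)^(-(1/2):ℝ) := by
        rw [hrpow, div_mul_eq_div_div, div_eq_mul_inv]

/-- The key pointwise negativity after symmetrization. -/
lemma Fint_key (α β : ℝ) (hα : 0 < α) (hαβ : α < β) (u : ℝ)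
    (hu : u ∈ Set.Ioo 0 ((α+β)/2)) :
    Fint α β (u + (β-α)/2) + Fint α β (-u + (β-α)/2) < 0 := by
  obtain ⟨hu0, huL⟩ := hu
  have hLp : (0:ℝ) < (α+β)/2 + u := by linarith
  have hLm : (0:ℝ) < (α+β)/2 - u := by linarith
  have h1 : Fint α β (u + (β-α)/2)
      = 2*u / (Real.sqrt ((u + (β-α)/2)^2 + 4)
          * (Real.sqrt ((α+β)/2 + u) * Real.sqrt ((α+β)/2 - u))) := by
    unfold Fint
    rw [show 2*(u + (β-α)/2) + α - β = 2*u from by ring,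
      show ((u + (β-α)/2)^2 + 4) * (α + (u + (β-α)/2)) * (β - (u + (β-α)/2))
        = ((u + (β-α)/2)^2 + 4) * (((α+β)/2 + u) * ((α+β)/2 - u)) from by ring,
      Real.sqrt_mul (by positivity), Real.sqrt_mul hLp.le]
  have h2 : Fint α β (-u + (β-α)/2)
      = -(2*u / (Real.sqrt ((-u + (β-α)/2)^2 + 4)
          * (Real.sqrt ((α+β)/2 + u) * Real.sqrt ((α+β)/2 - u)))) := by
    unfold Fint
    rw [show 2*(-u + (β-α)/2) + α - β = -(2*u) from by ring,
      show ((-u + (β-α)/2)^2 + 4) * (α + (-u + (β-α)/2)) * (β - (-u + (β-α)/2))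
        = ((-u + (β-α)/2)^2 + 4) * (((α+β)/2 + u) * ((α+β)/2 - u)) from by ring,
      Real.sqrt_mul (by positivity), Real.sqrt_mul hLp.le, neg_div]
  rw [h1, h2]
  have hS : 0 < Real.sqrt ((α+β)/2 + u) * Real.sqrt ((α+β)/2 - u) := by positivity
  have hA : 0 < Real.sqrt ((u + (β-α)/2)^2 + 4) := by positivity
  have hB : 0 < Real.sqrt ((-u + (β-α)/2)^2 + 4) := by positivity
  have hBA : Real.sqrt ((-u + (β-α)/2)^2 + 4) < Real.sqrt ((u + (β-α)/2)^2 + 4) := by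
    apply Real.sqrt_lt_sqrt (by positivity)
    nlinarith [mul_pos hu0 (show (0:ℝ) < (β-α)/2 by linarith)]
  have key : 2*u / (Real.sqrt ((u + (β-α)/2)^2 + 4)
        * (Real.sqrt ((α+β)/2 + u) * Real.sqrt ((α+β)/2 - u)))
      < 2*u / (Real.sqrt ((-u + (β-α)/2)^2 + 4)
        * (Real.sqrt ((α+β)/2 + u) * Real.sqrt ((α+β)/2 - u))) := by
    apply div_lt_div_of_pos_left (by linarith) (by positivity)
    exact mul_lt_mul_of_pos_right hBA hS
  linarith

theorem stmt_0 (α β : ℝ) (hα : 0 < α) (hαβ : α < β) :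
    (∫ ζ in (-α)..β, (2*ζ + α - β) / Real.sqrt ((ζ^2 + 4) * (α + ζ) * (β - ζ))) < 0 := by
  have hL : 0 < (α+β)/2 := by linarith
  have hfull : IntervalIntegrable (Fint α β) volume (-α) β :=
    (Fint_int_left α β hα hαβ).trans (Fint_int_right α β hα hαβ)
  -- shift: g x := Fint α β (x + (β-α)/2) is integrable on [-(α+β)/2, (α+β)/2]
  have hg : IntervalIntegrable (fun x => Fint α β (x + (β-α)/2)) volume (-((α+β)/2)) ((α+β)/2) := by
    have h := hfull.comp_add_right ((β-α)/2)
    have e1 : -α - (β-α)/2 = -((α+β)/2) := by ring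
    have e2 : β - (β-α)/2 = (α+β)/2 := by ring
    rwa [e1, e2] at h
  have hsub : Set.uIcc (0:ℝ) ((α+β)/2) ⊆ Set.uIcc (-((α+β)/2)) ((α+β)/2) := by
    rw [Set.uIcc_of_le hL.le, Set.uIcc_of_le (by linarith)]
    exact Set.Icc_subset_Icc (by linarith) le_rfl
  have hsub2 : Set.uIcc (-((α+β)/2)) (0:ℝ) ⊆ Set.uIcc (-((α+β)/2)) ((α+β)/2) := by
    rw [Set.uIcc_of_le (by linarith), Set.uIcc_of_le (by linarith)]
    exact Set.Icc_subset_Icc le_rfl (by linarith)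
  have hg1 : IntervalIntegrable (fun x => Fint α β (x + (β-α)/2)) volume 0 ((α+β)/2) :=
    hg.mono_set hsub
  have hg0 : IntervalIntegrable (fun x => Fint α β (x + (β-α)/2)) volume (-((α+β)/2)) 0 :=
    hg.mono_set hsub2
  have hg2 : IntervalIntegrable (fun x => Fint α β (-x + (β-α)/2)) volume 0 ((α+β)/2) := by
    have h := ((IntervalIntegrable.iff_comp_neg (by simp)).mp hg0).symm
    rw [neg_neg, neg_zero] at h
    exact h
  -- rewrite the integral
  have e0 : (∫ ζ in (-α)..β, (2*ζ + α - β) / Real.sqrt ((ζ^2 + 4) * (α + ζ) * (β - ζ)))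
      = ∫ x in (-((α+β)/2))..((α+β)/2), Fint α β (x + (β-α)/2) := by
    rw [intervalIntegral.integral_comp_add_right (Fint α β) ((β-α)/2),
      show -((α+β)/2) + (β-α)/2 = -α from by ring,
      show (α+β)/2 + (β-α)/2 = β from by ring]
    rfl
  have e1 : (∫ x in (-((α+β)/2))..(0:ℝ), Fint α β (x + (β-α)/2))
      = ∫ x in (0:ℝ)..((α+β)/2), Fint α β (-x + (β-α)/2) := by
    rw [intervalIntegral.integral_comp_neg (fun x => Fint α β (x + (β-α)/2)), neg_zero]
  have e2 : (∫ x in (-((α+β)/2))..((α+β)/2), Fint α β (x + (β-α)/2))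
      = ∫ x in (0:ℝ)..((α+β)/2), (Fint α β (x + (β-α)/2) + Fint α β (-x + (β-α)/2)) := by
    rw [intervalIntegral.integral_add hg1 hg2,
      ← intervalIntegral.integral_add_adjacent_intervals hg0 hg1, e1]
    ring
  rw [e0, e2]
  have hneg : 0 < ∫ x in (0:ℝ)..((α+β)/2),
      -(Fint α β (x + (β-α)/2) + Fint α β (-x + (β-α)/2)) := by
    apply intervalIntegral.intervalIntegral_pos_of_pos_on ((hg1.add hg2).neg)
    · intro x hx
      have := Fint_key α β hα hαβ x hx
      simp only [Pi.neg_apply]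
      linarith
    · exact hL
  rw [intervalIntegral.integral_neg] at hneg
  linarith
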